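/- Let T be a finitary monad on Set and F : Set^T ⥤ Set^T finitary, preserving surjective T-algebra morphisms and sifted colimits. For any finite set X and any function f : X → φF, there exist a finite set Y, an F-coalgebra d : TY → F(TY), and a function g : X → Y such that f = inj_d ∘ η_Y ∘ g, where inj_d : TY → φF is the colimit injection and η is the unit of T. -/

import Mathlib

open CategoryTheory CategoryTheory.Limits

/-- An `F`-coalgebra has free finitely generated carrier. -/
def Pffg (T : Monad (Type)) (F : T.Algebra ⥤ T.Algebra)
    (C : Endofunctor.Coalgebra F) : Prop :=
  ∃ X : Type, Finite X ∧ Nonempty (C.V ≅ T.free.obj X)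

/-- The coalgebra on a free finitely generated carrier as an object of the full
subcategory. -/
def ffgObj (T : Monad (Type)) (F : T.Algebra ⥤ T.Algebra) (X : Type) (hX : Finite X)
    (c : T.free.obj X ⟶ F.obj (T.free.obj X)) : ObjectProperty.FullSubcategory (Pffg T F) :=
  ⟨⟨T.free.obj X, c⟩, X, hX, ⟨Iso.refl _⟩⟩

namespace PhiF
variable {T : Monad (Type)}

lemma eta_nat {X Y : Type} (u : X → Y) (x : X) :
    T.η.app Y (u x) = (T : Type ⥤ Type).map (↾u) (T.η.app X x) := by
  exact T.η.naturality_apply (↾u) x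

lemma map_comp_apply {X Y Z : Type} (u : X → Y) (v : Y → Z) (t : (T : Type ⥤ Type).obj X) :
    (T : Type ⥤ Type).map (↾fun x => v (u x)) t
      = (T : Type ⥤ Type).map (↾v) ((T : Type ⥤ Type).map (↾u) t) := by
  exact (T : Type ⥤ Type).map_comp_apply (↾u) (↾v) t

/-- Extension of a function to an algebra morphism from the free algebra. -/
def freeLift {X : Type} {A : T.Algebra} (u : X → A.A) : T.free.obj X ⟶ A where
  f := ↾fun t => A.a ((T : Type ⥤ Type).map (↾u) t)
  h := by
    ext t
    have assoc := ConcreteCategory.congr_hom A.assoc ((T : Type ⥤ Type).map ((T : Type ⥤ Type).map (↾u)) t)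
    have nat := ConcreteCategory.congr_hom (T.μ.naturality (↾u)) t
    simp only [types_comp_apply] at assoc nat ⊢
    simp only [Monad.free_obj_a]
    simp only [Functor.comp_map] at nat
    calc A.a ((T : Type ⥤ Type).map (↾fun t => A.a ((T : Type ⥤ Type).map (↾u) t)) t)
        = A.a ((T : Type ⥤ Type).map A.a ((T : Type ⥤ Type).map ((T : Type ⥤ Type).map (↾u)) t)) :=
          congrArg A.a (map_comp_apply _ _ t)
      _ = A.a (T.μ.app A.A ((T : Type ⥤ Type).map ((T : Type ⥤ Type).map (↾u)) t)) := assoc.symm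
      _ = A.a ((T : Type ⥤ Type).map (↾u) (T.μ.app X t)) := congrArg A.a nat


@[simp] lemma freeLift_η {X : Type} {A : T.Algebra} (u : X → A.A) (x : X) :
    (freeLift u).f (T.η.app X x) = u x := by
  show A.a ((T : Type ⥤ Type).map (↾u) (T.η.app X x)) = u x
  rw [← eta_nat]
  simpa using ConcreteCategory.congr_hom A.unit (u x)

lemma algHom_free_apply {X : Type} {A : T.Algebra} (g : T.free.obj X ⟶ A)
    (t : (T : Type ⥤ Type).obj X) :
    g.f t = A.a ((T : Type ⥤ Type).map (↾fun x => g.f (T.η.app X x)) t) := by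
  have hg : A.a ((T : Type ⥤ Type).map g.f ((T : Type ⥤ Type).map (T.η.app X) t))
      = g.f (T.μ.app X ((T : Type ⥤ Type).map (T.η.app X) t)) :=
    ConcreteCategory.congr_hom g.h ((T : Type ⥤ Type).map (T.η.app X) t)
  have runit : T.μ.app X ((T : Type ⥤ Type).map (T.η.app X) t) = t := by
    exact ConcreteCategory.congr_hom (T.right_unit X) t
  rw [runit] at hg
  rw [← hg]
  exact (congrArg A.a (map_comp_apply (T.η.app X) g.f t)).symm

lemma free_ext {X : Type} {A : T.Algebra} {g h : T.free.obj X ⟶ A}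
    (H : ∀ x, g.f (T.η.app X x) = h.f (T.η.app X x)) : g = h := by
  have : (fun x => g.f (T.η.app X x)) = fun x => h.f (T.η.app X x) := funext H
  apply Monad.Algebra.Hom.ext'
  refine ConcreteCategory.ext_apply (fun t => ?_)
  rw [algHom_free_apply g t, algHom_free_apply h t, this]

noncomputable section Main

variable (T : Monad (Type)) (F : T.Algebra ⥤ T.Algebra)

/-- Small index of coalgebras with carrier free on `Fin n`. -/
abbrev K : Type := Σ n : ℕ, (T.free.obj (Fin n) ⟶ F.obj (T.free.obj (Fin n)))

/-- Small generating set. -/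
abbrev B : Type := Σ k : K T F, Fin k.1

/-- The coalgebra indexed by `k : K`. -/
def objK (k : K T F) : Endofunctor.Coalgebra F := ⟨T.free.obj (Fin k.1), k.2⟩

/-- The coalgebra indexed by `k : K`, as an object of the full subcategory. -/
def objJ (k : K T F) : ObjectProperty.FullSubcategory (Pffg T F) := ffgObj T F (Fin k.1) inferInstance k.2

def ρ (k : K T F) : T.free.obj (Fin k.1) ⟶ T.free.obj (B T F) :=
  T.free.map (↾fun y => (⟨k, y⟩ : B T F))

/-- Two terms of `T B` are related iff every algebra map out of `T B` respecting the
generating relations identifies them. -/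
def rel (a b : (T : Type ⥤ Type).obj (B T F)) : Prop :=
  ∀ (Z : T.Algebra) (h : T.free.obj (B T F) ⟶ Z),
    (∀ (k k' : K T F) (w : objK T F k ⟶ objK T F k') (y : Fin k.1),
        h.f ((ρ T F k').f (w.f.f (T.η.app (Fin k.1) y))) = h.f (T.η.app (B T F) ⟨k, y⟩)) →
    h.f a = h.f b

def relSetoid : Setoid ((T : Type ⥤ Type).obj (B T F)) :=
  ⟨rel T F, ⟨fun _ _ _ _ => rfl, fun h Z g hg => (h Z g hg).symm,
    fun h1 h2 Z g hg => (h1 Z g hg).trans (h2 Z g hg)⟩⟩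

def Q : Type := Quotient (relSetoid T F)

def mkQ : (T : Type ⥤ Type).obj (B T F) → Q T F := Quotient.mk _

lemma mkQ_surjective : Function.Surjective (mkQ T F) :=
  fun q => ⟨q.out, q.out_eq⟩

lemma mkQ_out (x : Q T F) : mkQ T F x.out = x := Quotient.out_eq x

lemma rel_of_mkQ_eq {a b} (h : mkQ T F a = mkQ T F b) : rel T F a b := Quotient.exact h

lemma algHom_μ_apply {Xt : Type} {Z : T.Algebra} (h : T.free.obj Xt ⟶ Z)
    {W : Type} (g : W → (T : Type ⥤ Type).obj Xt) (u : (T : Type ⥤ Type).obj W) :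
    h.f (T.μ.app Xt ((T : Type ⥤ Type).map (↾g) u)) =
      Z.a ((T : Type ⥤ Type).map (↾fun w => h.f (g w)) u) := by
  have hh : Z.a ((T : Type ⥤ Type).map h.f ((T : Type ⥤ Type).map (↾g) u))
      = h.f (T.μ.app Xt ((T : Type ⥤ Type).map (↾g) u)) :=
    ConcreteCategory.congr_hom h.h ((T : Type ⥤ Type).map (↾g) u)
  rw [← hh]
  exact (congrArg Z.a (map_comp_apply g h.f u)).symm

lemma mkQ_lift {W : Type} (g₁ g₂ : W → (T : Type ⥤ Type).obj (B T F))
    (hg : ∀ w, rel T F (g₁ w) (g₂ w)) (u : (T : Type ⥤ Type).obj W) :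
    mkQ T F (T.μ.app (B T F) ((T : Type ⥤ Type).map (↾g₁) u)) =
      mkQ T F (T.μ.app (B T F) ((T : Type ⥤ Type).map (↾g₂) u)) := by
  apply Quotient.sound
  intro Z h hR
  rw [algHom_μ_apply T h g₁ u, algHom_μ_apply T h g₂ u]
  congr 1
  have : (fun w => h.f (g₁ w)) = fun w => h.f (g₂ w) := funext fun w => hg w Z h hR
  rw [this]

/-- The structure map of the quotient algebra. -/
def Qa : (T : Type ⥤ Type).obj (Q T F) → Q T F :=
  fun t => mkQ T F (T.μ.app (B T F) ((T : Type ⥤ Type).map (↾Quotient.out) t))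

lemma Qa_mk_eq {W : Type} (g : W → (T : Type ⥤ Type).obj (B T F))
    (u : (T : Type ⥤ Type).obj W) :
    Qa T F ((T : Type ⥤ Type).map (↾fun w => mkQ T F (g w)) u) =
      mkQ T F (T.μ.app (B T F) ((T : Type ⥤ Type).map (↾g) u)) := by
  show mkQ T F (T.μ.app (B T F)
      ((T : Type ⥤ Type).map (↾Quotient.out) ((T : Type ⥤ Type).map (↾fun w => mkQ T F (g w)) u))) = _
  refine Eq.trans (congrArg (fun v => mkQ T F (T.μ.app (B T F) v))
    (map_comp_apply (fun w => mkQ T F (g w)) (Quotient.out : Q T F → _) u).symm) ?_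
  exact mkQ_lift T F _ g (fun w => rel_of_mkQ_eq T F (mkQ_out T F (mkQ T F (g w)))) u

def Qalg : T.Algebra where
  A := Q T F
  a := ↾Qa T F
  unit := by
    ext qq
    show mkQ T F (T.μ.app (B T F)
        ((T : Type ⥤ Type).map (↾Quotient.out) (T.η.app (Q T F) qq))) = qq
    rw [show (T : Type ⥤ Type).map (↾Quotient.out) (T.η.app (Q T F) qq)
        = T.η.app ((T : Type ⥤ Type).obj (B T F)) qq.out from (eta_nat Quotient.out qq).symm]
    have h2 : T.μ.app (B T F) (T.η.app ((T : Type ⥤ Type).obj (B T F)) qq.out) = qq.out := by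
      exact ConcreteCategory.congr_hom (T.left_unit (B T F)) qq.out
    rw [h2, mkQ_out]
  assoc := by
    ext u
    show Qa T F (T.μ.app (Q T F) u) = Qa T F ((T : Type ⥤ Type).map (↾Qa T F) u)
    have hR : Qa T F ((T : Type ⥤ Type).map (↾Qa T F) u)
        = mkQ T F (T.μ.app (B T F)
            ((T : Type ⥤ Type).map (↾fun w => T.μ.app (B T F)
              ((T : Type ⥤ Type).map (↾Quotient.out) w)) u)) :=
      Qa_mk_eq T F (fun w => T.μ.app (B T F) ((T : Type ⥤ Type).map (↾Quotient.out) w)) u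
    rw [hR]
    show mkQ T F (T.μ.app (B T F)
        ((T : Type ⥤ Type).map (↾Quotient.out) (T.μ.app (Q T F) u))) = _
    have hnat : (T : Type ⥤ Type).map (↾Quotient.out) (T.μ.app (Q T F) u)
        = T.μ.app ((T : Type ⥤ Type).obj (B T F))
            ((T : Type ⥤ Type).map ((T : Type ⥤ Type).map (↾Quotient.out)) u) := by
      exact (T.μ.naturality_apply (↾(Quotient.out : Q T F → (T : Type ⥤ Type).obj (B T F))) u).symm
    rw [hnat]
    have hassoc := ConcreteCategory.congr_hom (T.assoc (B T F))
      ((T : Type ⥤ Type).map ((T : Type ⥤ Type).map (↾(Quotient.out : Q T F → (T : Type ⥤ Type).obj (B T F)))) u)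
    simp only [types_comp_apply] at hassoc
    rw [← hassoc]
    exact congrArg (fun v => mkQ T F (T.μ.app (B T F) v))
      (map_comp_apply ((T : Type ⥤ Type).map (↾Quotient.out)) (T.μ.app (B T F)) u).symm

/-- The projection as an algebra morphism. -/
def qHom : T.free.obj (B T F) ⟶ Qalg T F where
  f := ↾mkQ T F
  h := by
    ext t
    show Qa T F ((T : Type ⥤ Type).map (↾mkQ T F) t) = mkQ T F (T.μ.app (B T F) t)
    have h := Qa_mk_eq T F (fun b => b) t
    have hid : (T : Type ⥤ Type).map (↾fun b : (T : Type ⥤ Type).obj (B T F) => b) t = t := by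
      exact ConcreteCategory.congr_hom ((T : Type ⥤ Type).map_id ((T : Type ⥤ Type).obj (B T F))) t
    rw [hid] at h
    exact h

/-- The colimit injection for a `K`-indexed coalgebra. -/
def lam (k : K T F) : (objK T F k).V ⟶ Qalg T F := ρ T F k ≫ qHom T F

lemma lam_η (k : K T F) (y : Fin k.1) :
    (lam T F k).f (T.η.app (Fin k.1) y) = mkQ T F (T.η.app (B T F) ⟨k, y⟩) := by
  show mkQ T F ((ρ T F k).f (T.η.app (Fin k.1) y)) = _
  have : (ρ T F k).f (T.η.app (Fin k.1) y) = T.η.app (B T F) ⟨k, y⟩ := by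
    show (T : Type ⥤ Type).map (↾fun y => (⟨k, y⟩ : B T F)) (T.η.app (Fin k.1) y) = _
    exact (eta_nat _ _).symm
  rw [this]

lemma lam_w {k k' : K T F} (w : objK T F k ⟶ objK T F k') :
    w.f ≫ lam T F k' = lam T F k := by
  apply free_ext
  intro y
  show (lam T F k').f (w.f.f (T.η.app (Fin k.1) y)) = (lam T F k).f (T.η.app (Fin k.1) y)
  rw [lam_η]
  show mkQ T F ((ρ T F k').f (w.f.f (T.η.app (Fin k.1) y))) = _
  exact Quotient.sound (fun Z h hR => hR k k' w y)

variable {T F}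

/-- Choice of an identification of an object of the subcategory with a `Fin`-free algebra. -/
def eIso (j : ObjectProperty.FullSubcategory (Pffg T F)) :
    Σ n : ℕ, (j.obj.V ≅ T.free.obj (Fin n)) :=
  let X := j.property.choose
  have hfin : Finite X := j.property.choose_spec.1
  let e1 : j.obj.V ≅ T.free.obj X := j.property.choose_spec.2.some
  ⟨(Finite.exists_equiv_fin X).choose,
    e1 ≪≫ T.free.mapIso (Finite.exists_equiv_fin X).choose_spec.some.toIso⟩

/-- The `K`-index of an object of the subcategory. -/
def kOf (j : ObjectProperty.FullSubcategory (Pffg T F)) : K T F :=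
  ⟨(eIso j).1, (eIso j).2.inv ≫ j.obj.str ≫ F.map (eIso j).2.hom⟩

attribute [reducible] objK kOf

/-- The chosen identification as a morphism of coalgebras. -/
def eHom (j : ObjectProperty.FullSubcategory (Pffg T F)) : j ⟶ objJ T F (kOf j) :=
  ObjectProperty.homMk ⟨(eIso j).2.hom, by
    show j.obj.str ≫ F.map (eIso j).2.hom
      = (eIso j).2.hom ≫ ((eIso j).2.inv ≫ j.obj.str ≫ F.map (eIso j).2.hom)
    rw [Iso.hom_inv_id_assoc]⟩

variable (T F)

/-- The colimit injection for an arbitrary object of the subcategory. -/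
def kappa (j : ObjectProperty.FullSubcategory (Pffg T F)) : j.obj.V ⟶ Qalg T F :=
  (eIso j).2.hom ≫ lam T F (kOf j)

lemma kappa_nat {j j' : ObjectProperty.FullSubcategory (Pffg T F)} (u : j ⟶ j') :
    u.hom.f ≫ kappa T F j' = kappa T F j := by
  have hcond : (objK T F (kOf j)).str ≫ F.map ((eIso j).2.inv ≫ u.hom.f ≫ (eIso j').2.hom)
      = ((eIso j).2.inv ≫ u.hom.f ≫ (eIso j').2.hom) ≫ (objK T F (kOf j')).str := by
    show ((eIso j).2.inv ≫ j.obj.str ≫ F.map (eIso j).2.hom) ≫ _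
      = _ ≫ ((eIso j').2.inv ≫ j'.obj.str ≫ F.map (eIso j').2.hom)
    rw [F.map_comp, F.map_comp]
    have hu : j.obj.str ≫ F.map u.hom.f = u.hom.f ≫ j'.obj.str := u.hom.h
    simp only [Category.assoc]
    rw [← Category.assoc (F.map (eIso j).2.hom), ← F.map_comp, Iso.hom_inv_id, F.map_id,
      Category.id_comp, ← Category.assoc j.obj.str, hu, Category.assoc, Iso.hom_inv_id_assoc]
  have h10 := lam_w T F (⟨(eIso j).2.inv ≫ u.hom.f ≫ (eIso j').2.hom, hcond⟩ :
    objK T F (kOf j) ⟶ objK T F (kOf j'))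
  show u.hom.f ≫ (eIso j').2.hom ≫ lam T F (kOf j') = (eIso j).2.hom ≫ lam T F (kOf j)
  rw [← h10]
  show u.hom.f ≫ (eIso j').2.hom ≫ lam T F (kOf j')
    = (eIso j).2.hom ≫ ((eIso j).2.inv ≫ u.hom.f ≫ (eIso j').2.hom) ≫ lam T F (kOf j')
  simp only [Category.assoc, Iso.hom_inv_id_assoc]

lemma kappa_objJ (k : K T F) : kappa T F (objJ T F k) = lam T F k := by
  have := lam_w T F (show objK T F k ⟶ objK T F (kOf (objJ T F k)) from
    ⟨(eHom (objJ T F k)).hom.f, (eHom (objJ T F k)).hom.h⟩)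
  exact this

section Desc

variable (Z : T.Algebra) (z : ∀ j : ObjectProperty.FullSubcategory (Pffg T F), j.obj.V ⟶ Z)

/-- The induced map out of the free algebra on `B`. -/
def hZ : T.free.obj (B T F) ⟶ Z :=
  freeLift (fun b => (z (objJ T F b.1)).f (T.η.app (Fin b.1.1) b.2))

lemma hZ_ρ (k : K T F) : ρ T F k ≫ hZ T F Z z = z (objJ T F k) := by
  apply free_ext
  intro y
  show (hZ T F Z z).f ((ρ T F k).f (T.η.app _ y)) = _
  have h1 : (ρ T F k).f (T.η.app (Fin k.1) y) = T.η.app (B T F) ⟨k, y⟩ := by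
    show (T : Type ⥤ Type).map (↾fun y => (⟨k, y⟩ : B T F)) (T.η.app (Fin k.1) y) = _
    exact (eta_nat _ _).symm
  rw [h1]
  exact freeLift_η _ _

lemma hZ_resp (hz : ∀ {j j' : ObjectProperty.FullSubcategory (Pffg T F)} (u : j ⟶ j'), u.hom.f ≫ z j' = z j) : ∀ (k k' : K T F) (w : objK T F k ⟶ objK T F k') (y : Fin k.1),
    (hZ T F Z z).f ((ρ T F k').f (w.f.f (T.η.app (Fin k.1) y)))
      = (hZ T F Z z).f (T.η.app (B T F) ⟨k, y⟩) := by
  intro k k' w y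
  have h1 := ConcreteCategory.congr_hom (congrArg Monad.Algebra.Hom.f (hZ_ρ T F Z z k')) (w.f.f (T.η.app (Fin k.1) y))
  have h2 : w.f ≫ z (objJ T F k') = z (objJ T F k) :=
    hz (ObjectProperty.homMk w : objJ T F k ⟶ objJ T F k')
  have h3 := ConcreteCategory.congr_hom (congrArg Monad.Algebra.Hom.f h2) (T.η.app (Fin k.1) y)
  have h4 : (hZ T F Z z).f (T.η.app (B T F) ⟨k, y⟩) = (z (objJ T F k)).f (T.η.app _ y) :=
    freeLift_η _ _
  rw [h4]
  exact h1.trans h3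

variable (hz : ∀ {j j' : ObjectProperty.FullSubcategory (Pffg T F)} (u : j ⟶ j'), u.hom.f ≫ z j' = z j)

/-- The descended algebra morphism on the quotient. -/
def descHom : Qalg T F ⟶ Z where
  f := ↾Quotient.lift (hZ T F Z z).f (fun a b r => (show rel T F a b from r) Z (hZ T F Z z) (hZ_resp T F Z z hz))
  h := by
    ext t
    show Z.a ((T : Type ⥤ Type).map
        (↾Quotient.lift (hZ T F Z z).f
          (fun a b r => (show rel T F a b from r) Z (hZ T F Z z) (hZ_resp T F Z z hz))) t)
      = (hZ T F Z z).f (T.μ.app (B T F) ((T : Type ⥤ Type).map (↾Quotient.out) t))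
    rw [algHom_μ_apply T (hZ T F Z z) Quotient.out t]
    congr 1
    have hfun : (Quotient.lift (hZ T F Z z).f
        (fun a b r => (show rel T F a b from r) Z (hZ T F Z z) (hZ_resp T F Z z hz)) : Q T F → Z.A)
          = fun w => (hZ T F Z z).f (Quotient.out w) := by
      funext qq
      conv_lhs => rw [← mkQ_out T F qq]
      rfl
    exact congrArg (fun φ : Q T F → Z.A => (T : Type ⥤ Type).map (↾φ) t) hfun

lemma qHom_descHom : qHom T F ≫ descHom T F Z z hz = hZ T F Z z := by
  apply Monad.Algebra.Hom.ext'
  rfl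

lemma descHom_fac (j : ObjectProperty.FullSubcategory (Pffg T F)) :
    kappa T F j ≫ descHom T F Z z hz = z j := by
  have h1 : lam T F (kOf j) ≫ descHom T F Z z hz = z (objJ T F (kOf j)) := by
    show (ρ T F (kOf j) ≫ qHom T F) ≫ descHom T F Z z hz = _
    rw [Category.assoc, qHom_descHom, hZ_ρ]
  have h3 := hz (eHom j)
  show ((eIso j).2.hom ≫ lam T F (kOf j)) ≫ descHom T F Z z hz = z j
  rw [Category.assoc, h1]
  exact h3

end Desc

lemma Q_hom_ext {Z : T.Algebra} {h₁ h₂ : Qalg T F ⟶ Z}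
    (H : ∀ k : K T F, lam T F k ≫ h₁ = lam T F k ≫ h₂) : h₁ = h₂ := by
  have hfree : qHom T F ≫ h₁ = qHom T F ≫ h₂ := by
    apply free_ext
    rintro ⟨k, y⟩
    show h₁.f (mkQ T F (T.η.app (B T F) ⟨k, y⟩)) = h₂.f (mkQ T F (T.η.app (B T F) ⟨k, y⟩))
    rw [← lam_η T F k y]
    exact ConcreteCategory.congr_hom (congrArg Monad.Algebra.Hom.f (H k)) (T.η.app (Fin k.1) y)
  apply Monad.Algebra.Hom.ext'
  ext qq
  obtain ⟨t, rfl⟩ := mkQ_surjective T F qq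
  exact ConcreteCategory.congr_hom (congrArg Monad.Algebra.Hom.f hfree) t

lemma strNat : ∀ (j j' : ObjectProperty.FullSubcategory (Pffg T F)) (u : j ⟶ j'),
    u.hom.f ≫ (j'.obj.str ≫ F.map (kappa T F j')) = j.obj.str ≫ F.map (kappa T F j) := by
  intro j j' u
  rw [← Category.assoc, ← u.hom.h, Category.assoc, ← F.map_comp, kappa_nat T F u]

/-- The coalgebra structure map on the quotient algebra. -/
def gam : Qalg T F ⟶ F.obj (Qalg T F) :=
  descHom T F (F.obj (Qalg T F)) (fun j => j.obj.str ≫ F.map (kappa T F j)) (fun {j j'} u => strNat T F j j' u)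

/-- The quotient coalgebra. -/
def Qcoalg : Endofunctor.Coalgebra F := ⟨Qalg T F, gam T F⟩

lemma kappa_gam (j : ObjectProperty.FullSubcategory (Pffg T F)) :
    kappa T F j ≫ gam T F = j.obj.str ≫ F.map (kappa T F j) :=
  descHom_fac T F (F.obj (Qalg T F)) (fun j => j.obj.str ≫ F.map (kappa T F j)) (fun {j j'} u => strNat T F j j' u) j

/-- Naturality of the legs of an arbitrary cocone. -/
lemma sNat (s : Cocone (ObjectProperty.ι (Pffg T F))) :
    ∀ (j j' : ObjectProperty.FullSubcategory (Pffg T F)) (u : j ⟶ j'),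
      u.hom.f ≫ (s.ι.app j').f = (s.ι.app j).f := by
  intro j j' u
  have hn := congrArg Endofunctor.Coalgebra.Hom.f (s.ι.naturality u)
  simp only [ObjectProperty.ι_map, Endofunctor.Coalgebra.comp_f, Functor.const_obj_map,
    Endofunctor.Coalgebra.id_f, Category.comp_id] at hn
  exact hn

/-- The descended coalgebra morphism out of the quotient coalgebra. -/
def descC (s : Cocone (ObjectProperty.ι (Pffg T F))) : Qcoalg T F ⟶ s.pt where
  f := descHom T F s.pt.V (fun j => (s.ι.app j).f) (fun {j j'} u => sNat T F s j j' u)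
  h := by
    show gam T F ≫ F.map _ = _ ≫ s.pt.str
    apply Q_hom_ext T F
    intro k
    rw [← kappa_objJ T F k]
    change kappa T F (objJ T F k) ≫ (gam T F ≫ F.map _) = kappa T F (objJ T F k) ≫ (_ ≫ s.pt.str)
    rw [← Category.assoc, kappa_gam T F (objJ T F k), Category.assoc, ← F.map_comp]
    rw [← Category.assoc, descHom_fac]
    exact (s.ι.app (objJ T F k)).h

/-- The colimit cocone. -/
def myCocone : Cocone (ObjectProperty.ι (Pffg T F)) where
  pt := Qcoalg T F
  ι :=
    { app := fun j => ⟨kappa T F j, (kappa_gam T F j).symm⟩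
      naturality := fun j j' u => by
        apply Endofunctor.Coalgebra.ext
        show u.hom.f ≫ kappa T F j' = kappa T F j ≫ 𝟙 _
        rw [Category.comp_id]
        exact kappa_nat T F u }

/-- It is a colimit. -/
def myIsColimit : IsColimit (myCocone T F) where
  desc := descC T F
  fac s j := by
    apply Endofunctor.Coalgebra.ext
    show kappa T F j ≫ descHom T F s.pt.V (fun j => (s.ι.app j).f) (fun {j j'} u => sNat T F s j j' u) = (s.ι.app j).f
    exact descHom_fac T F s.pt.V (fun j => (s.ι.app j).f) (fun {j j'} u => sNat T F s j j' u) j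
  uniq s m hm := by
    apply Endofunctor.Coalgebra.ext
    apply Q_hom_ext T F
    intro k
    rw [← kappa_objJ T F k]
    have h1 : kappa T F (objJ T F k) ≫ m.f = (s.ι.app (objJ T F k)).f :=
      congrArg Endofunctor.Coalgebra.Hom.f (hm (objJ T F k))
    show kappa T F (objJ T F k) ≫ m.f = kappa T F (objJ T F k) ≫ (descC T F s).f
    rw [h1]
    exact (descHom_fac T F s.pt.V (fun j => (s.ι.app j).f) (fun {j j'} u => sNat T F s j j' u) (objJ T F k)).symm

end Main

section Finitary

variable (Bt : Type)

/-- The diagram of finite subsets of a type. -/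
def finsetDiagram : Finset Bt ⥤ Type where
  obj S := {b // b ∈ S}
  map {S S'} u := ↾fun b => ⟨b.1, Finset.mem_of_subset (leOfHom u) b.2⟩

/-- The canonical cocone over the diagram of finite subsets. -/
def finsetCocone : Cocone (finsetDiagram Bt) where
  pt := Bt
  ι :=
    { app := fun S => ↾fun b => b.1
      naturality := fun S S' u => rfl }

/-- Every type is the filtered colimit of its finite subsets. -/
def finsetIsColimit : IsColimit (finsetCocone Bt) where
  desc s := ↾fun b => s.ι.app {b} ⟨b, Finset.mem_singleton_self b⟩
  fac s S := by
    ext b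
    have hle : ({b.1} : Finset Bt) ⟶ S :=
      homOfLE (Finset.singleton_subset_iff.2 b.2)
    have hnat := ConcreteCategory.congr_hom (s.ι.naturality hle) ⟨b.1, Finset.mem_singleton_self b.1⟩
    simp only [types_comp_apply, Functor.const_obj_map, types_id_apply] at hnat
    exact hnat.symm
  uniq s m hm := by
    ext b
    exact ConcreteCategory.congr_hom (hm {b}) ⟨b, Finset.mem_singleton_self b⟩

lemma finitary_exhaust {T : Monad (Type)} [PreservesFilteredColimits (T : Type ⥤ Type)]
    (t : (T : Type ⥤ Type).obj Bt) :
    ∃ (S : Finset Bt) (y : (T : Type ⥤ Type).obj {b // b ∈ S}),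
      (T : Type ⥤ Type).map (↾fun b => b.1) y = t := by
  have hc : IsColimit ((T : Type ⥤ Type).mapCocone (finsetCocone Bt)) :=
    isColimitOfPreserves _ (finsetIsColimit Bt)
  obtain ⟨S, y, hy⟩ := Types.jointly_surjective _ hc t
  exact ⟨S, y, hy⟩

end Finitary
end PhiF

open PhiF in
/-- Every map from a finite set `X` into (the underlying set of) `φF` factors through
the unit `η_Y` followed by the colimit injection of some coalgebra with free finitely
generated carrier `TY`. -/
theorem map_into_phiF_factors
    (T : Monad (Type)) [PreservesFilteredColimits (T : Type ⥤ Type)]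
    (F : T.Algebra ⥤ T.Algebra) [PreservesFilteredColimits F]
    (hsurj : ∀ {A B : T.Algebra} (f : A ⟶ B), Function.Surjective f.f →
      Function.Surjective (F.map f).f)
    (hsift : ∀ (J : Type) (_ : SmallCategory J) (_ : IsSifted J),
      Nonempty (PreservesColimitsOfShape J F))
    [HasColimit (ObjectProperty.ι (Pffg T F))]
    (X : Type) [Finite X]
    (f : X → (colimit (ObjectProperty.ι (Pffg T F))).V.A) :
    ∃ (Y : Type) (hY : Finite Y) (d : T.free.obj Y ⟶ F.obj (T.free.obj Y)) (g : X → Y),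
      ∀ x : X,
        f x = (colimit.ι (ObjectProperty.ι (Pffg T F)) (ffgObj T F Y hY d)).f.f
          (T.η.app Y (g x)) := by
  classical
  let CC : ColimitCocone (ObjectProperty.ι (Pffg T F)) := ⟨myCocone T F, myIsColimit T F⟩
  let Φ : colimit (ObjectProperty.ι (Pffg T F)) ≅ Qcoalg T F :=
    colimit.isoColimitCocone CC
  -- retraction of Φ.hom
  have hretr : ∀ v, Φ.inv.f.f (Φ.hom.f.f v) = v := fun v =>
    ConcreteCategory.congr_hom (congrArg (fun (h : colimit (ObjectProperty.ι (Pffg T F)) ⟶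
      colimit (ObjectProperty.ι (Pffg T F))) => h.f.f) Φ.hom_inv_id) v
  -- stage 1: finite support
  have hstage : ∀ x : X, ∃ (S : Finset (B T F))
      (y : (T : Type ⥤ Type).obj {b // b ∈ S}),
      (T : Type ⥤ Type).map (↾fun b => b.1) y = Quotient.out (Φ.hom.f.f (f x)) :=
    fun x => finitary_exhaust (B T F) _
  choose Sx yx hyx using hstage
  haveI := Fintype.ofFinite X
  let Stot : Finset (B T F) := Finset.univ.sup Sx
  let t' : X → (T : Type ⥤ Type).obj {b // b ∈ Stot} := fun x =>
    (T : Type ⥤ Type).map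
      (↾fun b => ⟨b.1, Finset.mem_of_subset (Finset.le_sup (Finset.mem_univ x)) b.2⟩) (yx x)
  have ht' : ∀ x, (T : Type ⥤ Type).map (↾fun (b : {b // b ∈ Stot}) => b.1) (t' x)
      = Quotient.out (Φ.hom.f.f (f x)) := by
    intro x
    show (T : Type ⥤ Type).map _ ((T : Type ⥤ Type).map _ (yx x)) = _
    rw [← map_comp_apply]
    exact hyx x
  -- stage 2: the finite coalgebra j1
  let ks : Finset (K T F) := Stot.image Sigma.fst
  let Y1 : Type := Σ k : {k : K T F // k ∈ ks}, Fin k.1.1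
  let ρ' : ∀ k : {k : K T F // k ∈ ks}, (T.free.obj (Fin k.1.1) ⟶ T.free.obj Y1) :=
    fun k => T.free.map (↾fun y => (⟨k, y⟩ : Y1))
  let d1 : T.free.obj Y1 ⟶ F.obj (T.free.obj Y1) :=
    freeLift (fun p => (F.map (ρ' p.1)).f ((p.1.1.2).f (T.η.app (Fin p.1.1.1) p.2)))
  let j1 := ffgObj T F Y1 inferInstance d1
  have hσcond : ∀ k : {k : K T F // k ∈ ks},
      (objK T F k.1).str ≫ F.map (ρ' k) = ρ' k ≫ d1 := by
    intro k
    apply free_ext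
    intro y
    show (F.map (ρ' k)).f ((k.1.2).f (T.η.app _ y)) = d1.f ((ρ' k).f (T.η.app _ y))
    have h1 : (ρ' k).f (T.η.app (Fin k.1.1) y) = T.η.app Y1 ⟨k, y⟩ := by
      show (T : Type ⥤ Type).map (↾fun y => (⟨k, y⟩ : Y1)) (T.η.app (Fin k.1.1) y) = _
      exact (eta_nat _ _).symm
    rw [h1]
    exact (freeLift_η (A := F.obj (T.free.obj Y1))
      (fun p : Y1 => (F.map (ρ' p.1)).f ((p.1.1.2).f (T.η.app (Fin p.1.1.1) p.2)))
      (⟨k, y⟩ : Y1)).symm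
  let ι1 : Y1 → B T F := fun p => ⟨p.1.1, p.2⟩
  have hkey : T.free.map (↾ι1) ≫ qHom T F = kappa T F j1 := by
    apply free_ext
    rintro ⟨k, y⟩
    have h1 : (T.free.map (↾ι1)).f (T.η.app Y1 ⟨k, y⟩) = T.η.app (B T F) ⟨k.1, y⟩ := by
      show (T : Type ⥤ Type).map (↾ι1) (T.η.app Y1 ⟨k, y⟩) = _
      exact (eta_nat ι1 (⟨k, y⟩ : Y1)).symm
    have h2 : (ρ' k).f (T.η.app (Fin k.1.1) y) = T.η.app Y1 ⟨k, y⟩ := by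
      show (T : Type ⥤ Type).map (↾fun y => (⟨k, y⟩ : Y1)) (T.η.app (Fin k.1.1) y) = _
      exact (eta_nat _ _).symm
    show mkQ T F ((T.free.map (↾ι1)).f (T.η.app Y1 ⟨k, y⟩)) = (kappa T F j1).f (T.η.app Y1 ⟨k, y⟩)
    rw [h1, ← lam_η T F k.1 y, ← h2]
    have h3 := kappa_nat T F (ObjectProperty.homMk ⟨ρ' k, hσcond k⟩ : objJ T F k.1 ⟶ j1)
    have h4 := kappa_objJ T F k.1
    calc (lam T F k.1).f (T.η.app (Fin k.1.1) y)
        = (kappa T F (objJ T F k.1)).f (T.η.app (Fin k.1.1) y) := by rw [h4]; rfl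
      _ = (kappa T F j1).f ((ρ' k).f (T.η.app (Fin k.1.1) y)) := by
          rw [← h3]; rfl
  -- stage 3: express f x through j1
  let u' : {b // b ∈ Stot} → Y1 := fun b =>
    ⟨⟨b.1.1, Finset.mem_image_of_mem Sigma.fst b.2⟩, b.1.2⟩
  let t'' : X → (T : Type ⥤ Type).obj Y1 := fun x => (T : Type ⥤ Type).map (↾u') (t' x)
  have ht'' : ∀ x, (T : Type ⥤ Type).map (↾ι1) (t'' x) = Quotient.out (Φ.hom.f.f (f x)) := by
    intro x
    show (T : Type ⥤ Type).map (↾ι1) ((T : Type ⥤ Type).map (↾u') (t' x)) = _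
    rw [← map_comp_apply]
    exact ht' x
  have hfx : ∀ x, f x =
      (colimit.ι (ObjectProperty.ι (Pffg T F)) j1).f.f (t'' x) := by
    intro x
    have hcomm := colimit.isoColimitCocone_ι_hom CC j1
    have hc2 : Φ.hom.f.f ((colimit.ι (ObjectProperty.ι (Pffg T F)) j1).f.f (t'' x))
        = (kappa T F j1).f (t'' x) :=
      ConcreteCategory.congr_hom (congrArg (fun (h : (ObjectProperty.ι (Pffg T F)).obj j1 ⟶
        Qcoalg T F) => h.f.f) hcomm) (t'' x)
    have hc1 : Φ.hom.f.f (f x) = (kappa T F j1).f (t'' x) := by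
      rw [← mkQ_out T F (Φ.hom.f.f (f x)), ← ht'' x]
      exact ConcreteCategory.congr_hom (congrArg Monad.Algebra.Hom.f hkey) (t'' x)
    have := hc1.trans hc2.symm
    have h5 := congrArg Φ.inv.f.f this
    rw [hretr, hretr] at h5
    exact h5
  -- stage 4: the surjection trick
  let Yt : Type := Y1 ⊕ X
  let pmap : T.free.obj Yt ⟶ T.free.obj Y1 :=
    freeLift (Sum.elim (fun y1 => T.η.app Y1 y1) t'')
  have hsec : T.free.map (↾(Sum.inl : Y1 → Yt)) ≫ pmap = 𝟙 (T.free.obj Y1) := by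
    apply free_ext
    intro y1
    show pmap.f ((T.free.map (↾(Sum.inl : Y1 → Yt))).f (T.η.app Y1 y1)) = T.η.app Y1 y1
    have h1 : (T.free.map (↾(Sum.inl : Y1 → Yt))).f (T.η.app Y1 y1) = T.η.app Yt (Sum.inl y1) := by
      show (T : Type ⥤ Type).map (↾(Sum.inl : Y1 → Yt)) (T.η.app Y1 y1) = _
      exact (eta_nat _ _).symm
    rw [h1]
    exact freeLift_η _ (Sum.inl y1)
  have hpsurj : Function.Surjective pmap.f := by
    intro v
    refine ⟨(T : Type ⥤ Type).map (↾(Sum.inl : Y1 → Yt)) v, ?_⟩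
    exact ConcreteCategory.congr_hom (congrArg Monad.Algebra.Hom.f hsec) v
  have hFp := hsurj pmap hpsurj
  have hellex : ∀ y' : Yt, ∃ w, (F.map pmap).f w = d1.f (pmap.f (T.η.app Yt y')) :=
    fun y' => hFp _
  choose ell hell using hellex
  let d : T.free.obj Yt ⟶ F.obj (T.free.obj Yt) := freeLift ell
  have hpcond : d ≫ F.map pmap = pmap ≫ d1 := by
    apply free_ext
    intro y'
    show (F.map pmap).f (d.f (T.η.app Yt y')) = d1.f (pmap.f (T.η.app Yt y'))
    have h1 : d.f (T.η.app Yt y') = ell y' := freeLift_η _ _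
    rw [h1]
    exact hell y'
  let P : ffgObj T F Yt inferInstance d ⟶ j1 := ObjectProperty.homMk ⟨pmap, hpcond⟩
  have hw := colimit.w (ObjectProperty.ι (Pffg T F)) P
  refine ⟨Yt, inferInstance, d, Sum.inr, fun x => ?_⟩
  have h2 : pmap.f (T.η.app Yt (Sum.inr x)) = t'' x :=
    freeLift_η (A := T.free.obj Y1) (Sum.elim (fun y1 => T.η.app Y1 y1) t'') (Sum.inr x)
  have h3 := ConcreteCategory.congr_hom (congrArg (fun (h : (ObjectProperty.ι (Pffg T F)).obj
      (ffgObj T F Yt inferInstance d) ⟶ colimit (ObjectProperty.ι (Pffg T F)))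
      => h.f.f) hw) (T.η.app Yt (Sum.inr x))
  calc f x = (colimit.ι (ObjectProperty.ι (Pffg T F)) j1).f.f (t'' x) := hfx x
    _ = (colimit.ι (ObjectProperty.ι (Pffg T F)) j1).f.f
          (pmap.f (T.η.app Yt (Sum.inr x))) := by rw [h2]
    _ = (colimit.ι (ObjectProperty.ι (Pffg T F))
          (ffgObj T F Yt inferInstance d)).f.f (T.η.app Yt (Sum.inr x)) := h3
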